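/- arXiv:0708.3009 — 2 statements merged into one kernel-verified Lean document; each statement's English description precedes it below -/
import Mathlib

section
/- Let n, f be natural numbers with 2f ≤ n and let ν = ((2^f),(n-2f)). For any d ∈ D_ν with d ≠ d_0 d_{J_0}, where J_0 = (n-2f+1, n-2f+2, ..., n) and d_0 is the element of S_{2f} ⊆ S_n with (a)d_0 = (a+1)/2 for odd a and (a)d_0 = 2f+1-a/2 for even a, there exists an integer 1 ≤ j ≤ n-1 such that d s_j ∈ D_ν and ℓ(d s_j) = ℓ(d) + 1. In other words, d_0 d_{J_0} is the unique maximal element of D_ν under the weak right Bruhat order restricted to D_ν. -/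
/-!
STATEMENT 5.  0-based conventions as in the other combinatorial statements:
permutations of `{0,…,n-1}` are elements of `Equiv.Perm ℕ` fixing `x ≥ n`;
the entry of the bitableau `t^ν d` at position `p` is `d p`; the paper's
right-action product `d s_j` (1-based `j`, `1 ≤ j ≤ n-1`) is `sw j0 * d`
for the 0-based index `j0 = j - 1` (so `j0 + 2 ≤ n`).  The element
`d_0 d_{J_0}` is the explicit permutation `maxd` described by the
hypotheses: it sends `2k ↦ n-2f+k`, `2k+1 ↦ n-1-k` (`k < f`) and
`a ↦ a-2f` for `2f ≤ a < n`.
-/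

noncomputable section

def sw (a : ℕ) : Equiv.Perm ℕ := Equiv.swap a (a + 1)

noncomputable def len (σ : Equiv.Perm ℕ) : ℕ :=
  Set.ncard {p : ℕ × ℕ | p.1 < p.2 ∧ σ p.2 < σ p.1}

def Dnu (n f : ℕ) (d : Equiv.Perm ℕ) : Prop :=
  (∀ x, n ≤ x → d x = x) ∧
  (∀ k, k < f → d (2 * k) < d (2 * k + 1)) ∧
  (∀ k, k + 1 < f → d (2 * k) < d (2 * k + 2)) ∧
  (∀ j, 2 * f ≤ j → j + 1 < n → d j < d (j + 1))

/-- the set of "constrained" position pairs of the bitableau shape -/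
def ConsP (f p q : ℕ) : Prop :=
  (q = p + 1 ∧ (2 * f ≤ p ∨ p % 2 = 0)) ∨ (q = p + 2 ∧ p % 2 = 0 ∧ q < 2 * f)

lemma st5_swap_mono (j x y : ℕ) (hxy : x < y) (hne : ¬(x = j ∧ y = j + 1)) :
    Equiv.swap j (j + 1) x < Equiv.swap j (j + 1) y := by
  simp only [Equiv.swap_apply_def]; split_ifs <;> omega

lemma st5_swap_lt_iff (j x y : ℕ) :
    (Equiv.swap j (j + 1) y < Equiv.swap j (j + 1) x) ↔
      ((y < x ∧ ¬((x = j ∧ y = j + 1) ∨ (x = j + 1 ∧ y = j))) ∨ (x = j ∧ y = j + 1)) := by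
  simp only [Equiv.swap_apply_def]; split_ifs <;> omega

lemma st5_lt (n : ℕ) (d : Equiv.Perm ℕ) (hfix : ∀ x, n ≤ x → d x = x) :
    ∀ x, x < n → d x < n := by
  intro x hx
  by_contra h
  push_neg at h
  have h1 : d (d x) = d x := hfix _ h
  have := d.injective h1
  omega

lemma st5_symm_fix (n : ℕ) (d : Equiv.Perm ℕ) (hfix : ∀ x, n ≤ x → d x = x) :
    ∀ x, n ≤ x → d.symm x = x := by
  intro x hx
  have : d x = x := hfix x hx
  conv_lhs => rw [← this]
  exact d.symm_apply_apply x

lemma st5_symm_lt (n : ℕ) (d : Equiv.Perm ℕ) (hfix : ∀ x, n ≤ x → d x = x) :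
    ∀ x, x < n → d.symm x < n := by
  intro x hx
  by_contra h
  push_neg at h
  have h1 : d (d.symm x) = d.symm x := hfix _ h
  rw [Equiv.apply_symm_apply] at h1
  omega

lemma st5_inv_finite (n : ℕ) (d : Equiv.Perm ℕ) (hfix : ∀ x, n ≤ x → d x = x) :
    {p : ℕ × ℕ | p.1 < p.2 ∧ d p.2 < d p.1}.Finite := by
  apply Set.Finite.subset ((Set.finite_Iio n).prod (Set.finite_Iio n))
  rintro ⟨a, b⟩ hab
  obtain ⟨h1, h2⟩ := hab
  have h1' : a < b := h1
  have h2' : d b < d a := h2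
  have hb : b < n := by
    by_contra hbn
    push_neg at hbn
    have hdb : d b = b := hfix b hbn
    by_cases han : a < n
    · have := st5_lt n d hfix a han; omega
    · have hda : d a = a := hfix a (by omega); omega
  exact Set.mem_prod.mpr ⟨Set.mem_Iio.mpr (by omega), Set.mem_Iio.mpr (by omega)⟩

lemma st5_len_succ (n j : ℕ) (d : Equiv.Perm ℕ) (hfix : ∀ x, n ≤ x → d x = x)
    (hpq : d.symm j < d.symm (j + 1)) : len (sw j * d) = len d + 1 := by
  have hset : {p : ℕ × ℕ | p.1 < p.2 ∧ (sw j * d) p.2 < (sw j * d) p.1}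
      = insert (d.symm j, d.symm (j + 1)) {p : ℕ × ℕ | p.1 < p.2 ∧ d p.2 < d p.1} := by
    ext ⟨a, b⟩
    simp only [Set.mem_setOf_eq, Set.mem_insert_iff, Prod.mk.injEq, sw, Equiv.Perm.mul_apply]
    constructor
    · rintro ⟨hab, hlt⟩
      rw [st5_swap_lt_iff j (d a) (d b)] at hlt
      rcases hlt with ⟨hyx, _⟩ | ⟨hxj, hyj⟩
      · exact Or.inr ⟨hab, hyx⟩
      · left
        constructor
        · rw [← hxj, Equiv.symm_apply_apply]
        · rw [← hyj, Equiv.symm_apply_apply]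
    · rintro (⟨ha, hb⟩ | ⟨hab, hlt⟩)
      · subst ha; subst hb
        refine ⟨hpq, ?_⟩
        rw [Equiv.apply_symm_apply, Equiv.apply_symm_apply, Equiv.swap_apply_left,
          Equiv.swap_apply_right]
        omega
      · refine ⟨hab, ?_⟩
        apply st5_swap_mono j (d b) (d a) hlt
        rintro ⟨hdb, hda⟩
        have hbp : b = d.symm j := by rw [← hdb, Equiv.symm_apply_apply]
        have haq : a = d.symm (j + 1) := by rw [← hda, Equiv.symm_apply_apply]
        omega
  have hnm : (d.symm j, d.symm (j + 1)) ∉ {p : ℕ × ℕ | p.1 < p.2 ∧ d p.2 < d p.1} := by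
    simp only [Set.mem_setOf_eq, Equiv.apply_symm_apply]
    omega
  unfold len
  rw [hset, Set.ncard_insert_of_notMem hnm (st5_inv_finite n d hfix)]

lemma st5_Dnu_swap (n f j : ℕ) (d : Equiv.Perm ℕ) (hd : Dnu n f d) (hj : j + 1 < n)
    (hpq : d.symm j < d.symm (j + 1)) (hnc : ¬ ConsP f (d.symm j) (d.symm (j + 1))) :
    Dnu n f (sw j * d) := by
  obtain ⟨hfix, h1, h2, h3⟩ := hd
  have key : ∀ a b, d a < d b → ConsP f a b → (sw j * d) a < (sw j * d) b := by
    intro a b hab hcab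
    simp only [sw, Equiv.Perm.mul_apply]
    apply st5_swap_mono j (d a) (d b) hab
    rintro ⟨hda, hdb⟩
    have ha : d.symm j = a := by rw [← hda, Equiv.symm_apply_apply]
    have hb : d.symm (j + 1) = b := by rw [← hdb, Equiv.symm_apply_apply]
    exact hnc (by rw [ha, hb]; exact hcab)
  refine ⟨?_, ?_, ?_, ?_⟩
  · intro x hx
    simp only [sw, Equiv.Perm.mul_apply]
    rw [hfix x hx]
    exact Equiv.swap_apply_of_ne_of_ne (by omega) (by omega)
  · intro k hk
    exact key _ _ (h1 k hk) (Or.inl ⟨rfl, Or.inr (by omega)⟩)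
  · intro k hk
    exact key _ _ (h2 k hk) (Or.inr ⟨rfl, by omega, by omega⟩)
  · intro a ha han
    exact key _ _ (h3 a ha han) (Or.inl ⟨rfl, Or.inl ha⟩)

lemma st5_key (n f : ℕ) (h2f : 2 * f ≤ n) (d : Equiv.Perm ℕ) (hd : Dnu n f d)
    (H : ∀ j, j + 1 < n → d.symm j < d.symm (j + 1) → ConsP f (d.symm j) (d.symm (j + 1))) :
    (∀ v, v < n - 2 * f → d.symm v = 2 * f + v) ∧
    (∀ k, k < f → d.symm (n - 2 * f + k) = 2 * k) ∧
    (∀ k, k < f → d.symm (n - 1 - k) = 2 * k + 1) := by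
  obtain ⟨hfix, hrow1, hcol, hrow2⟩ := hd
  have hdlt := st5_lt n d hfix
  have hslt := st5_symm_lt n d hfix
  -- Lemma C : once in the first component, stay there
  have lemC : ∀ v, d.symm v < 2 * f → ∀ w, v ≤ w → w < n → d.symm w < 2 * f := by
    intro v h0 w hw
    induction w, hw using Nat.le_induction with
    | base => intro _; exact h0
    | succ w hvw ih =>
      intro hw1n
      have hsw : d.symm w < 2 * f := ih (by omega)
      rcases lt_trichotomy (d.symm w) (d.symm (w + 1)) with h | h | h
      · have hc := H w hw1n h
        rcases hc with ⟨hq, hca⟩ | ⟨hq, hp, hqf⟩ <;> omega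
      · exact absurd (d.symm.injective h) (by omega)
      · omega
  -- counting contradiction
  have hcount : ∀ v, v < n - 2 * f → ¬ (∀ w, v ≤ w → w < n → d.symm w < 2 * f) := by
    intro v hv hall
    have hle : (Finset.Ico v n).card ≤ (Finset.range (2 * f)).card := by
      apply Finset.card_le_card_of_injOn (fun w => d.symm w)
      · intro a ha
        simp only [Finset.mem_coe, Finset.mem_Ico] at ha
        simp only [Finset.mem_coe, Finset.mem_range]
        exact hall a ha.1 ha.2
      · intro a _ b _ hab
        exact d.symm.injective hab
    simp only [Nat.card_Ico, Finset.card_range] at hle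
    omega
  -- Step 1 : second component values
  have step1 : ∀ v, v < n - 2 * f → d.symm v = 2 * f + v := by
    intro v
    induction v using Nat.strong_induction_on with
    | _ v ih =>
      intro hv
      by_cases hp2f : 2 * f ≤ d.symm v
      · by_contra hne'
        have hpn : d.symm v < n := hslt v (by omega)
        rcases lt_or_gt_of_ne hne' with hlt' | hgt'
        · have hu := ih (d.symm v - 2 * f) (by omega) (by omega)
          have h1 : d.symm (d.symm v - 2 * f) = d.symm v := by omega
          have := d.symm.injective h1
          omega
        · have hrw := hrow2 (d.symm v - 1) (by omega) (by omega)
          have hpe : d.symm v - 1 + 1 = d.symm v := by omega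
          rw [hpe, Equiv.apply_symm_apply] at hrw
          have hu := ih (d (d.symm v - 1)) hrw (by omega)
          rw [Equiv.symm_apply_apply] at hu
          omega
      · exact absurd (lemC v (by omega)) (hcount v hv)
  -- positions ≥ 2f are taken by values < n - 2f
  have hge2f : ∀ v, n - 2 * f ≤ v → v < n → d.symm v < 2 * f := by
    intro v hv hvn
    by_contra hge
    push_neg at hge
    have hpn := hslt v hvn
    have hu := step1 (d.symm v - 2 * f) (by omega)
    have h1 : d.symm (d.symm v - 2 * f) = d.symm v := by omega
    have := d.symm.injective h1
    omega
  -- surjectivity onto the first component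
  have hsurj : ∀ a, a < 2 * f → ∃ v, n - 2 * f ≤ v ∧ v < n ∧ d.symm v = a := by
    intro a ha
    refine ⟨d a, ?_, hdlt a (by omega), d.symm_apply_apply a⟩
    by_contra hlt'
    push_neg at hlt'
    have := step1 (d a) hlt'
    rw [d.symm_apply_apply] at this
    omega
  -- odd descent lemma
  have OD : ∀ w, w < n → d.symm w % 2 = 1 → d.symm w < 2 * f →
      (∀ i, 2 * i < d.symm w → ∃ u, u < w ∧ d.symm u = 2 * i) →
      ∀ w', w ≤ w' → w' < n →
        d.symm w' % 2 = 1 ∧ d.symm w' ≤ d.symm w ∧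
          (∀ i, 2 * i < d.symm w' → ∃ u, u < w' ∧ d.symm u = 2 * i) := by
    intro w hwn hodd hlt2f hinv w' hww'
    induction w', hww' using Nat.le_induction with
    | base => intro _; exact ⟨hodd, le_refl _, hinv⟩
    | succ w' hww' ih =>
      intro hw'n
      obtain ⟨ho, hle, hi⟩ := ih (by omega)
      have hlt : d.symm (w' + 1) < d.symm w' := by
        rcases lt_trichotomy (d.symm w') (d.symm (w' + 1)) with h | h | h
        · have hc := H w' hw'n h
          rcases hc with ⟨hq, hca⟩ | ⟨hq, hp, hqf⟩ <;> omega
        · exact absurd (d.symm.injective h) (by omega)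
        · exact h
      have hodd' : d.symm (w' + 1) % 2 = 1 := by
        by_contra hev
        obtain ⟨u, hu, hue⟩ := hi (d.symm (w' + 1) / 2) (by omega)
        have hx : 2 * (d.symm (w' + 1) / 2) = d.symm (w' + 1) := by omega
        rw [hx] at hue
        exact absurd (d.symm.injective hue) (by omega)
      refine ⟨hodd', by omega, fun i hi2 => ?_⟩
      obtain ⟨u, hu, hue⟩ := hi i (by omega)
      exact ⟨u, by omega, hue⟩
  -- Step 2 : the even (first-column) positions
  have step2 : ∀ k, k < f → d.symm (n - 2 * f + k) = 2 * k := by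
    intro k
    induction k using Nat.strong_induction_on with
    | _ k ih =>
      intro hk
      have hwn : n - 2 * f + k < n := by omega
      have hpn : d.symm (n - 2 * f + k) < n := hslt _ hwn
      have hplt : d.symm (n - 2 * f + k) < 2 * f := hge2f _ (by omega) hwn
      by_cases hpar : d.symm (n - 2 * f + k) % 2 = 0
      · by_contra hne'
        rcases lt_or_gt_of_ne hne' with hlt' | hgt'
        · have hh := ih (d.symm (n - 2 * f + k) / 2) (by omega) (by omega)
          have h1 : d.symm (n - 2 * f + d.symm (n - 2 * f + k) / 2) = d.symm (n - 2 * f + k) := by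
            omega
          have := d.symm.injective h1
          omega
        · have hcol' := hcol (d.symm (n - 2 * f + k) / 2 - 1) (by omega)
          have harg : 2 * (d.symm (n - 2 * f + k) / 2 - 1) + 2 = d.symm (n - 2 * f + k) := by omega
          rw [harg, Equiv.apply_symm_apply] at hcol'
          have hu2 : d.symm (d (2 * (d.symm (n - 2 * f + k) / 2 - 1)))
              = 2 * (d.symm (n - 2 * f + k) / 2 - 1) := d.symm_apply_apply _
          by_cases huc : d (2 * (d.symm (n - 2 * f + k) / 2 - 1)) < n - 2 * f
          · have hs := step1 _ huc
            rw [hu2] at hs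
            omega
          · have hh := ih (d (2 * (d.symm (n - 2 * f + k) / 2 - 1)) - (n - 2 * f))
              (by omega) (by omega)
            have harg2 : n - 2 * f + (d (2 * (d.symm (n - 2 * f + k) / 2 - 1)) - (n - 2 * f))
                = d (2 * (d.symm (n - 2 * f + k) / 2 - 1)) := by omega
            rw [harg2, hu2] at hh
            omega
      · -- odd position
        have hrw := hrow1 (d.symm (n - 2 * f + k) / 2) (by omega)
        have harg : 2 * (d.symm (n - 2 * f + k) / 2) + 1 = d.symm (n - 2 * f + k) := by omega
        rw [harg, Equiv.apply_symm_apply] at hrw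
        have hu2 : d.symm (d (2 * (d.symm (n - 2 * f + k) / 2)))
            = 2 * (d.symm (n - 2 * f + k) / 2) := d.symm_apply_apply _
        have hjk : d.symm (n - 2 * f + k) / 2 < k := by
          by_cases huc : d (2 * (d.symm (n - 2 * f + k) / 2)) < n - 2 * f
          · have hs := step1 _ huc
            rw [hu2] at hs
            omega
          · have hh := ih (d (2 * (d.symm (n - 2 * f + k) / 2)) - (n - 2 * f))
              (by omega) (by omega)
            have harg2 : n - 2 * f + (d (2 * (d.symm (n - 2 * f + k) / 2)) - (n - 2 * f))
                = d (2 * (d.symm (n - 2 * f + k) / 2)) := by omega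
            rw [harg2, hu2] at hh
            omega
        have hODinv : ∀ i, 2 * i < d.symm (n - 2 * f + k) →
            ∃ u, u < n - 2 * f + k ∧ d.symm u = 2 * i := by
          intro i hi
          exact ⟨n - 2 * f + i, by omega, ih i (by omega) (by omega)⟩
        have hOD := OD (n - 2 * f + k) hwn (by omega) hplt hODinv
        obtain ⟨v, hv1, hv2, hv3⟩ := hsurj (2 * k) (by omega)
        rcases Nat.lt_trichotomy v (n - 2 * f + k) with hvc | hvc | hvc
        · have hh := ih (v - (n - 2 * f)) (by omega) (by omega)
          have harg2 : n - 2 * f + (v - (n - 2 * f)) = v := by omega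
          rw [harg2] at hh
          omega
        · rw [hvc] at hv3
          exact hv3
        · have := (hOD v (by omega) hv2).1
          omega
  -- Step 3 : the odd (second-column) positions, auxiliary form
  have step3 : ∀ i, i < f → d.symm (n - 2 * f + f + i) + (2 * i + 1) = 2 * f := by
    intro i
    induction i using Nat.strong_induction_on with
    | _ i ih =>
      intro hif
      have hwn : n - 2 * f + f + i < n := by omega
      have hp2f : d.symm (n - 2 * f + f + i) < 2 * f := hge2f _ (by omega) hwn
      have hodd : d.symm (n - 2 * f + f + i) % 2 = 1 := by
        by_contra hev
        have hs := step2 (d.symm (n - 2 * f + f + i) / 2) (by omega)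
        have h1 : d.symm (n - 2 * f + d.symm (n - 2 * f + f + i) / 2)
            = d.symm (n - 2 * f + f + i) := by omega
        have := d.symm.injective h1
        omega
      have hub : d.symm (n - 2 * f + f + i) + 2 * i + 1 ≤ 2 * f := by
        by_contra hgt
        have hih := ih ((2 * f - 1 - d.symm (n - 2 * f + f + i)) / 2) (by omega) (by omega)
        have h1 : d.symm (n - 2 * f + f + (2 * f - 1 - d.symm (n - 2 * f + f + i)) / 2)
            = d.symm (n - 2 * f + f + i) := by omega
        have := d.symm.injective h1
        omega
      by_contra hne'
      have hstrict : d.symm (n - 2 * f + f + i) + 2 * i + 1 < 2 * f := by omega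
      have hODinv : ∀ i', 2 * i' < d.symm (n - 2 * f + f + i) →
          ∃ u, u < n - 2 * f + f + i ∧ d.symm u = 2 * i' := by
        intro i' hi'
        exact ⟨n - 2 * f + i', by omega, step2 i' (by omega)⟩
      have hOD := OD (n - 2 * f + f + i) hwn hodd hp2f hODinv
      obtain ⟨v, hv1, hv2, hv3⟩ := hsurj (2 * f - 1 - 2 * i) (by omega)
      by_cases hc1 : v < n - 2 * f + f
      · have hs := step2 (v - (n - 2 * f)) (by omega)
        have harg : n - 2 * f + (v - (n - 2 * f)) = v := by omega
        rw [harg] at hs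
        omega
      · by_cases hc2 : v ≤ n - 2 * f + f + i
        · by_cases hc3 : v = n - 2 * f + f + i
          · rw [hc3] at hv3
            omega
          · have hih := ih (v - (n - 2 * f + f)) (by omega) (by omega)
            have harg : n - 2 * f + f + (v - (n - 2 * f + f)) = v := by omega
            rw [harg] at hih
            omega
        · have := (hOD v (by omega) hv2).2.1
          omega
  refine ⟨step1, step2, ?_⟩
  intro k hk
  have h3 := step3 (f - 1 - k) (by omega)
  have harg : n - 2 * f + f + (f - 1 - k) = n - 1 - k := by omega
  rw [harg] at h3
  omega

theorem stmt5 (n f : ℕ) (h2f : 2 * f ≤ n) (d maxd : Equiv.Perm ℕ)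
    (hm1 : ∀ k, k < f → maxd (2 * k) = n - 2 * f + k)
    (hm2 : ∀ k, k < f → maxd (2 * k + 1) = n - 1 - k)
    (hm3 : ∀ a, 2 * f ≤ a → a < n → maxd a = a - 2 * f)
    (hm4 : ∀ x, n ≤ x → maxd x = x)
    (hd : Dnu n f d) (hne : d ≠ maxd) :
    ∃ j, j + 2 ≤ n ∧ Dnu n f (sw j * d) ∧ len (sw j * d) = len d + 1 := by
  by_contra hcon
  push_neg at hcon
  have hfix := hd.1
  have H : ∀ j, j + 1 < n → d.symm j < d.symm (j + 1) →
      ConsP f (d.symm j) (d.symm (j + 1)) := by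
    intro j hj hlt
    by_contra hnc
    exact hcon j (by omega) (st5_Dnu_swap n f j d hd hj hlt hnc)
      (st5_len_succ n j d hfix hlt)
  obtain ⟨k1, k2, k3⟩ := st5_key n f h2f d hd H
  apply hne
  apply Equiv.ext
  intro x
  by_cases hxn : n ≤ x
  · rw [hfix x hxn, hm4 x hxn]
  push_neg at hxn
  by_cases hx2f : 2 * f ≤ x
  · have hk := k1 (x - 2 * f) (by omega)
    have harg : d.symm (x - 2 * f) = x := by omega
    have hdx : d x = x - 2 * f := ((Equiv.symm_apply_eq d).mp harg).symm
    rw [hdx, hm3 x hx2f hxn]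
  · push_neg at hx2f
    by_cases hpar : x % 2 = 0
    · have hkf : x / 2 < f := by omega
      have hk := k2 (x / 2) hkf
      have harg : d.symm (n - 2 * f + x / 2) = x := by omega
      have hdx : d x = n - 2 * f + x / 2 := ((Equiv.symm_apply_eq d).mp harg).symm
      have hmx := hm1 (x / 2) hkf
      have hx2 : 2 * (x / 2) = x := by omega
      rw [hx2] at hmx
      rw [hdx, hmx]
    · have hkf : x / 2 < f := by omega
      have hk := k3 (x / 2) hkf
      have harg : d.symm (n - 1 - x / 2) = x := by omega
      have hdx : d x = n - 1 - x / 2 := ((Equiv.symm_apply_eq d).mp harg).symm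
      have hmx := hm2 (x / 2) hkf
      have hx2 : 2 * (x / 2) + 1 = x := by omega
      rw [hx2] at hmx
      rw [hdx, hmx]
end
end

section
/- For every natural number n ≥ 0 and every 0 ≤ f ≤ ⌊n/2⌋, the symmetric group S_{2f} decomposes as a disjoint union S_{2f} = ⨆_{d ∈ D_f} Ψ d, where Ψ = S_{(2^f)} ⋊ Π with S_{(2^f)} the Young subgroup generated by s_1, s_3, ..., s_{2f-1} and Π the subgroup permuting the blocks {1,2},{3,4},...,{2f-1,2f}, and D_f is the set of distinguished representatives defined by the row-standard and first-column-increasing condition. -/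
/-!
STATEMENT 7.  0-based conventions in `Equiv.Perm ℕ`: `S_{2f}` is the set of
permutations fixing every `x ≥ 2f`.  `Ψ = S_{(2^f)} ⋊ Π` is generated by the
row transpositions `sw (2k)` (`k < f`) and the block swaps
`st i = sw (2i+1) * sw (2i+2) * sw (2i) * sw (2i+1)` (`i+1 < f`).
The paper's coset `Ψ d` (right actions, so `ψ d` is the function `d ∘ ψ`)
is `{d * ψ | ψ ∈ Ψ}` in Mathlib's convention.  The disjoint-union statement
`S_{2f} = ⨆_{d ∈ D_f} Ψ d` says each `σ ∈ S_{2f}` lies in `Ψ d` for exactly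
one `d ∈ D_f`.
-/

noncomputable section

def st (i : ℕ) : Equiv.Perm ℕ :=
  sw (2 * i + 1) * sw (2 * i + 2) * sw (2 * i) * sw (2 * i + 1)

def Psi (f : ℕ) : Subgroup (Equiv.Perm ℕ) :=
  Subgroup.closure
    ({σ | ∃ k, k < f ∧ σ = sw (2 * k)} ∪ {σ | ∃ i, i + 1 < f ∧ σ = st i})

def Df (f : ℕ) (d : Equiv.Perm ℕ) : Prop :=
  (∀ x, 2 * f ≤ x → d x = x) ∧
  (∀ k, k < f → d (2 * k) < d (2 * k + 1)) ∧
  (∀ k, k + 1 < f → d (2 * k) < d (2 * k + 2))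

/-- pair partner -/
def pa (y : ℕ) : ℕ := if y % 2 = 0 then y + 1 else y - 1

lemma pa_even (j : ℕ) : pa (2 * j) = 2 * j + 1 := by simp [pa, Nat.mul_mod_right]

lemma pa_odd (j : ℕ) : pa (2 * j + 1) = 2 * j := by
  simp only [pa]; split_ifs with h <;> omega

lemma pa_pa (z : ℕ) : pa (pa z) = z := by
  simp only [pa]; split_ifs <;> omega

lemma sw_spec (a x : ℕ) : sw a x = if x = a then a + 1 else if x = a + 1 then a else x := by
  simp [sw, Equiv.swap_apply_def]

lemma st_spec (i x : ℕ) :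
    st i x = if x = 2 * i then 2 * i + 2 else if x = 2 * i + 1 then 2 * i + 3
      else if x = 2 * i + 2 then 2 * i else if x = 2 * i + 3 then 2 * i + 1 else x := by
  simp only [st, Equiv.Perm.mul_apply, sw, Equiv.swap_apply_def]
  split_ifs <;> omega

def Bc (f : ℕ) : Set (Equiv.Perm ℕ) :=
  {β | (∀ x, 2 * f ≤ x → β x = x) ∧ ∀ k, k < f → β (2 * k + 1) = pa (β (2 * k))}

lemma Bc.lt {f : ℕ} {β : Equiv.Perm ℕ} (hβ : β ∈ Bc f) {y : ℕ} (hy : y < 2 * f) :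
    β y < 2 * f := by
  by_contra hge
  push_neg at hge
  have h1 := hβ.1 (β y) hge
  exact absurd (β.injective h1).symm (by omega)

lemma Bc.pa_comm {f : ℕ} {β : Equiv.Perm ℕ} (hβ : β ∈ Bc f) {y : ℕ} (hy : y < 2 * f) :
    β (pa y) = pa (β y) := by
  rcases Nat.even_or_odd y with ⟨j, hj⟩ | ⟨j, hj⟩
  · subst hj
    rw [show j + j = 2 * j by ring, pa_even]
    exact hβ.2 j (by omega)
  · subst hj
    rw [show 2 * j + 1 = 2 * j + 1 from rfl, pa_odd]
    have := hβ.2 j (by omega)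
    rw [this, pa_pa]

def Bgrp (f : ℕ) : Subgroup (Equiv.Perm ℕ) where
  carrier := Bc f
  one_mem' := by
    refine ⟨fun x _ => rfl, fun k _ => ?_⟩
    simp [pa_even]
  mul_mem' := by
    rintro a b ha hb
    refine ⟨fun x hx => ?_, fun k hk => ?_⟩
    · simp [Equiv.Perm.mul_apply, hb.1 x hx, ha.1 x hx]
    · have hblt : b (2 * k) < 2 * f := Bc.lt hb (by omega)
      simp only [Equiv.Perm.mul_apply, hb.2 k hk]
      exact Bc.pa_comm ha hblt
  inv_mem' := by
    rintro a ⟨ha1, ha2⟩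
    have ha : a ∈ Bc f := ⟨ha1, ha2⟩
    refine ⟨fun x hx => ?_, fun k hk => ?_⟩
    · conv_lhs => rw [← ha1 x hx]
      exact Equiv.symm_apply_apply a x
    · set y := a⁻¹ (2 * k) with hy
      have hay : a y = 2 * k := Equiv.apply_symm_apply a (2 * k)
      have hylt : y < 2 * f := by
        by_contra hge
        push_neg at hge
        have := ha1 y hge
        omega
      have : a (pa y) = 2 * k + 1 := by
        rw [Bc.pa_comm ha hylt, hay, pa_even]
      calc a⁻¹ (2 * k + 1) = a⁻¹ (a (pa y)) := by rw [this]
        _ = pa y := Equiv.symm_apply_apply a (pa y)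

lemma psi_le_B (f : ℕ) : Psi f ≤ Bgrp f := by
  rw [Psi, Subgroup.closure_le]
  rintro σ (⟨k, hk, rfl⟩ | ⟨i, hi, rfl⟩)
  · refine ⟨fun x hx => ?_, fun j hj => ?_⟩
    · rw [sw_spec]; split_ifs <;> omega
    · rcases eq_or_ne j k with rfl | hne
      · rw [show sw (2 * j) (2 * j + 1) = 2 * j by rw [sw_spec]; split_ifs <;> omega,
          show sw (2 * j) (2 * j) = 2 * j + 1 by rw [sw_spec]; split_ifs <;> omega, pa_odd]
      · rw [show sw (2 * k) (2 * j + 1) = 2 * j + 1 by rw [sw_spec]; split_ifs <;> omega,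
          show sw (2 * k) (2 * j) = 2 * j by rw [sw_spec]; split_ifs <;> omega, pa_even]
  · refine ⟨fun x hx => ?_, fun j hj => ?_⟩
    · rw [st_spec]; split_ifs <;> omega
    · rcases eq_or_ne j i with rfl | hne
      · rw [show st j (2 * j + 1) = 2 * j + 3 by rw [st_spec]; split_ifs <;> omega,
          show st j (2 * j) = 2 * j + 2 by rw [st_spec]; split_ifs <;> omega,
          show (2:ℕ) * j + 2 = 2 * (j + 1) by ring, pa_even]
        omega
      · rcases eq_or_ne j (i + 1) with rfl | hne2
        · rw [show st i (2 * (i+1) + 1) = 2 * i + 1 by rw [st_spec]; split_ifs <;> omega,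
            show st i (2 * (i+1)) = 2 * i by rw [st_spec]; split_ifs <;> omega, pa_even]
        · rw [show st i (2 * j + 1) = 2 * j + 1 by rw [st_spec]; split_ifs <;> omega,
            show st i (2 * j) = 2 * j by rw [st_spec]; split_ifs <;> omega, pa_even]

def Msr (f : ℕ) (σ : Equiv.Perm ℕ) : ℕ := ∑ k ∈ Finset.range f, (f - k) * σ (2 * k)

lemma sw_mem_Psi {f k : ℕ} (hk : k < f) : sw (2 * k) ∈ Psi f :=
  Subgroup.subset_closure (Or.inl ⟨k, hk, rfl⟩)

lemma st_mem_Psi {f i : ℕ} (hi : i + 1 < f) : st i ∈ Psi f :=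
  Subgroup.subset_closure (Or.inr ⟨i, hi, rfl⟩)

lemma ex_aux (f : ℕ) : ∀ N, ∀ σ : Equiv.Perm ℕ, (∀ x, 2 * f ≤ x → σ x = x) →
    Msr f σ < N → ∃ d : Equiv.Perm ℕ, Df f d ∧ ∃ ψ ∈ Psi f, σ = d * ψ := by
  intro N
  induction N with
  | zero => intro σ _ h; omega
  | succ N ih =>
    intro σ hσ hM
    by_cases h1 : ∃ k, k < f ∧ σ (2 * k + 1) < σ (2 * k)
    · obtain ⟨k, hk, hlt⟩ := h1
      set σ' := σ * sw (2 * k) with hσ'def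
      have happ : ∀ j, j ≠ k → σ' (2 * j) = σ (2 * j) := by
        intro j hj
        simp only [hσ'def, Equiv.Perm.mul_apply]
        rw [show sw (2 * k) (2 * j) = 2 * j by rw [sw_spec]; split_ifs <;> omega]
      have happk : σ' (2 * k) = σ (2 * k + 1) := by
        simp only [hσ'def, Equiv.Perm.mul_apply]
        rw [show sw (2 * k) (2 * k) = 2 * k + 1 by rw [sw_spec]; split_ifs <;> omega]
      have hσ'fix : ∀ x, 2 * f ≤ x → σ' x = x := by
        intro x hx
        simp only [hσ'def, Equiv.Perm.mul_apply]
        rw [show sw (2 * k) x = x by rw [sw_spec]; split_ifs <;> omega]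
        exact hσ x hx
      have hdec : Msr f σ' < Msr f σ := by
        apply Finset.sum_lt_sum
        · intro j hj
          rcases eq_or_ne j k with rfl | hne
          · rw [happk]; exact Nat.mul_le_mul_left _ (le_of_lt hlt)
          · rw [happ j hne]
        · exact ⟨k, Finset.mem_range.mpr hk, by
            rw [happk]
            have h0 : 0 < f - k := by omega
            exact mul_lt_mul_of_pos_left hlt h0⟩
      obtain ⟨d, hd, ψ, hψ, hEq⟩ := ih σ' hσ'fix (by omega)
      refine ⟨d, hd, ψ * sw (2 * k), mul_mem hψ (sw_mem_Psi hk), ?_⟩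
      have : σ = σ' * sw (2 * k) := by
        rw [hσ'def, mul_assoc, sw, Equiv.swap_mul_self, mul_one]
      rw [this, hEq, mul_assoc]
    · by_cases h2 : ∃ k, k + 1 < f ∧ σ (2 * k + 2) < σ (2 * k)
      · obtain ⟨k, hk, hlt⟩ := h2
        set σ' := σ * st k with hσ'def
        have happ : ∀ j, j ≠ k → j ≠ k + 1 → σ' (2 * j) = σ (2 * j) := by
          intro j hj hj2
          simp only [hσ'def, Equiv.Perm.mul_apply]
          rw [show st k (2 * j) = 2 * j by rw [st_spec]; split_ifs <;> omega]
        have happk : σ' (2 * k) = σ (2 * k + 2) := by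
          simp only [hσ'def, Equiv.Perm.mul_apply]
          rw [show st k (2 * k) = 2 * k + 2 by rw [st_spec]; split_ifs <;> omega]
        have happk1 : σ' (2 * (k + 1)) = σ (2 * k) := by
          simp only [hσ'def, Equiv.Perm.mul_apply]
          rw [show st k (2 * (k + 1)) = 2 * k by rw [st_spec]; split_ifs <;> omega]
        have hσ'fix : ∀ x, 2 * f ≤ x → σ' x = x := by
          intro x hx
          simp only [hσ'def, Equiv.Perm.mul_apply]
          rw [show st k x = x by rw [st_spec]; split_ifs <;> omega]
          exact hσ x hx
        have hdec : Msr f σ' < Msr f σ := by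
          have hsplit : ∀ τ : Equiv.Perm ℕ,
              Msr f τ = (f - k) * τ (2 * k) + ((f - (k + 1)) * τ (2 * (k + 1)) +
                ∑ j ∈ ((Finset.range f).erase k).erase (k + 1), (f - j) * τ (2 * j)) := by
            intro τ
            rw [Msr, ← Finset.add_sum_erase _ _ (Finset.mem_range.mpr (by omega : k < f)),
              ← Finset.add_sum_erase _ _
                (Finset.mem_erase.mpr ⟨by omega, Finset.mem_range.mpr (by omega : k + 1 < f)⟩)]
          have hS : ∑ j ∈ ((Finset.range f).erase k).erase (k + 1), (f - j) * σ' (2 * j)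
              = ∑ j ∈ ((Finset.range f).erase k).erase (k + 1), (f - j) * σ (2 * j) := by
            apply Finset.sum_congr rfl
            intro j hj
            simp only [Finset.mem_erase] at hj
            rw [happ j hj.2.1 hj.1]
          rw [hsplit σ', hsplit σ, happk, happk1, hS]
          set m := f - (k + 1) with hm
          have hfk : f - k = m + 1 := by omega
          rw [hfk]
          have e1 : (m + 1) * σ (2 * k + 2) = m * σ (2 * k + 2) + σ (2 * k + 2) := by ring
          have e2 : (m + 1) * σ (2 * k) = m * σ (2 * k) + σ (2 * k) := by ring
          have e3 : σ (2 * (k + 1)) = σ (2 * k + 2) := by norm_num [show 2 * (k+1) = 2*k+2 by ring]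
          rw [e1, e2, e3]
          have hmc := Nat.mul_le_mul_left m (le_of_lt hlt)
          linarith [hlt]
        obtain ⟨d, hd, ψ, hψ, hEq⟩ := ih σ' hσ'fix (by omega)
        refine ⟨d, hd, ψ * (st k)⁻¹, mul_mem hψ (inv_mem (st_mem_Psi hk)), ?_⟩
        have : σ = σ' * (st k)⁻¹ := by
          rw [hσ'def, mul_assoc, mul_inv_cancel, mul_one]
        rw [this, hEq, mul_assoc]
      · push_neg at h1 h2
        refine ⟨σ, ⟨hσ, fun k hk => ?_, fun k hk => ?_⟩, 1, one_mem _, (mul_one σ).symm⟩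
        · exact lt_of_le_of_ne (h1 k hk) (fun h => by
            have := σ.injective h; omega)
        · exact lt_of_le_of_ne (h2 k hk) (fun h => by
            have := σ.injective h; omega)

lemma df_mono {f : ℕ} {d : Equiv.Perm ℕ} (hd : Df f d) :
    ∀ a b, a < b → b < f → d (2 * a) < d (2 * b) := by
  have key : ∀ t a, a + t + 1 < f → d (2 * a) < d (2 * (a + t + 1)) := by
    intro t
    induction t with
    | zero =>
      intro a h
      have := hd.2.2 a (by omega)
      rw [show 2 * (a + 0 + 1) = 2 * a + 2 by ring]
      exact this
    | succ t iht =>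
      intro a h
      have h1 := iht a (by omega)
      have h2 := hd.2.2 (a + t + 1) (by omega)
      rw [show 2 * (a + (t + 1) + 1) = 2 * (a + t + 1) + 2 by ring]
      exact lt_trans h1 h2
  intro a b hab hbf
  have := key (b - a - 1) a (by omega)
  rwa [show a + (b - a - 1) + 1 = b by omega] at this

lemma smono_ge {f : ℕ} {j : ℕ → ℕ} (hmono : ∀ a b, a < b → b < f → j a < j b) :
    ∀ t a, a + t < f → j a + t ≤ j (a + t) := by
  intro t
  induction t with
  | zero => intro a _; simp
  | succ t iht =>
    intro a h
    have h1 := iht a (by omega)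
    have h2 := hmono (a + t) (a + t + 1) (by omega) (by omega)
    rw [show a + (t + 1) = a + t + 1 from rfl]
    omega

lemma beta_eq_one {f : ℕ} {d d' β : Equiv.Perm ℕ} (hd : Df f d) (hd' : Df f d')
    (hβ : β ∈ Bgrp f) (h : d' = d * β) : β = 1 := by
  have hβc : β ∈ Bc f := hβ
  -- for each k < f, β (2k) is even and d' pair k corresponds to d pair β(2k)/2
  have hkey : ∀ k, k < f → β (2 * k) = 2 * (β (2 * k) / 2) ∧
      d' (2 * k) = d (2 * (β (2 * k) / 2)) := by
    intro k hk
    have hblt : β (2 * k) < 2 * f := Bc.lt hβc (by omega)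
    set j := β (2 * k) / 2 with hj
    have hjf : j < f := by omega
    have hd'k : d' (2 * k) = d (β (2 * k)) := by rw [h]; rfl
    have hd'k1 : d' (2 * k + 1) = d (pa (β (2 * k))) := by
      rw [h, Equiv.Perm.mul_apply, hβc.2 k hk]
    rcases Nat.even_or_odd (β (2 * k)) with he | ho
    · have hev : β (2 * k) = 2 * j := by
        obtain ⟨m, hm⟩ := he; omega
      exact ⟨hev, by rw [hd'k, hev]⟩
    · exfalso
      have hod : β (2 * k) = 2 * j + 1 := by
        obtain ⟨m, hm⟩ := ho; omega
      have h1 : d' (2 * k) = d (2 * j + 1) := by rw [hd'k, hod]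
      have h2 : d' (2 * k + 1) = d (2 * j) := by rw [hd'k1, hod, pa_odd]
      have h3 := hd'.2.1 k hk
      have h4 := hd.2.1 j hjf
      omega
  -- the induced map on pair indices
  set jm : ℕ → ℕ := fun k => β (2 * k) / 2 with hjm
  have hjmlt : ∀ k, k < f → jm k < f := by
    intro k hk
    have := Bc.lt hβc (show 2 * k < 2 * f by omega)
    simp only [hjm]; omega
  have hmono : ∀ a b, a < b → b < f → jm a < jm b := by
    intro a b hab hbf
    have ha := hkey a (by omega)
    have hb := hkey b hbf
    have h1 : d (2 * jm a) < d (2 * jm b) := by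
      rw [← ha.2, ← hb.2]; exact df_mono hd' a b hab hbf
    by_contra hle
    push_neg at hle
    rcases eq_or_lt_of_le hle with heq | hlt2
    · rw [heq] at h1; omega
    · have := df_mono hd (jm b) (jm a) hlt2 (hjmlt a (by omega))
      omega
  have hid : ∀ k, k < f → jm k = k := by
    intro k hk
    have hge : k ≤ jm k := by
      have h0 := smono_ge hmono k 0 (by omega)
      simp only [Nat.zero_add] at h0
      omega
    rcases eq_or_lt_of_le hge with heq | hgt
    · omega
    · exfalso
      have h1 := smono_ge hmono (f - 1 - k) k (by omega)
      have h2 := hjmlt (k + (f - 1 - k)) (by omega)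
      omega
  -- conclude β = 1
  ext x
  simp only [Equiv.Perm.coe_one, id_eq]
  by_cases hx : x < 2 * f
  · set k := x / 2 with hk
    have hkf : k < f := by omega
    have hb2k : β (2 * k) = 2 * k := by
      have := (hkey k hkf).1
      have := hid k hkf
      simp only [hjm] at this
      omega
    rcases Nat.even_or_odd x with he | ho
    · have : x = 2 * k := by obtain ⟨m, hm⟩ := he; omega
      rw [this, hb2k]
    · have hxo : x = 2 * k + 1 := by obtain ⟨m, hm⟩ := ho; omega
      rw [hxo, hβc.2 k hkf, hb2k, pa_even]
  · exact hβc.1 x (by omega)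

theorem stmt7 (n f : ℕ) (hf : 2 * f ≤ n) (σ : Equiv.Perm ℕ)
    (hσ : ∀ x, 2 * f ≤ x → σ x = x) :
    ∃! d : Equiv.Perm ℕ, Df f d ∧ ∃ ψ ∈ Psi f, σ = d * ψ := by
  obtain ⟨d, hd, ψ, hψ, hEq⟩ := ex_aux f (Msr f σ + 1) σ hσ (Nat.lt_succ_self _)
  refine ⟨d, ⟨hd, ψ, hψ, hEq⟩, ?_⟩
  rintro d' ⟨hd', ψ', hψ', hEq'⟩
  have hβmem : ψ' * ψ⁻¹ ∈ Bgrp f := psi_le_B f (mul_mem hψ' (inv_mem hψ))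
  have h : d' = d * (ψ' * ψ⁻¹)⁻¹ := by
    have h1 : d' * ψ' = d * ψ := by rw [← hEq', ← hEq]
    group
    calc d' = d' * ψ' * ψ'⁻¹ := by group
      _ = d * ψ * ψ'⁻¹ := by rw [h1]
      _ = d * (ψ * ψ'⁻¹) := by group
  have hinv : (ψ' * ψ⁻¹)⁻¹ ∈ Bgrp f := inv_mem hβmem
  have := beta_eq_one hd hd' hinv (by rw [h])
  rw [h, this, mul_one]
end
end
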